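/- Assume A₀ ≥ 1, A₁ ≥ 1 and A₀ + A₁ ≥ 3, and let μ be the ghost measure of f. Then for every i ≥ 0 and every integer k with 0 ≤ k < 2^i, μ([k/2^i, (k+1)/2^i)) = (1/(A₀+A₁)^i) · (1/σ(∞)) · ( f(2^i + k) + (b₀+b₁)/(A₀+A₁−2) ), where σ(∞) = f(1) + (b₀+b₁)/(A₀+A₁−2). -/

import Mathlib

open MeasureTheory Filter Topology

/-- The `N`-th approximant to the ghost measure of `f`: the normalised Dirac comb built from
the values of `f` on the fundamental region `[2^N, 2^(N+1))`. -/
noncomputable def ghostApprox (f : ℕ → ℕ) (N : ℕ) : Measure ℝ :=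
  (∑ n ∈ Finset.range (2 ^ N), (f (2 ^ N + n) : ENNReal))⁻¹ •
    ∑ n ∈ Finset.range (2 ^ N), (f (2 ^ N + n) : ENNReal) • Measure.dirac ((n : ℝ) / 2 ^ N)

/-- Weak (vague) convergence of a sequence of finite measures on `ℝ`. -/
def WeakLimit (μs : ℕ → Measure ℝ) (μ : Measure ℝ) : Prop :=
  ∀ g : BoundedContinuousFunction ℝ ℝ,
    Tendsto (fun N => ∫ x, g x ∂(μs N)) atTop (𝓝 (∫ x, g x ∂μ))

open Finset


lemma sum_range_two_mul' (g : ℕ → ℕ) (m : ℕ) :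
    ∑ n ∈ Finset.range (2 * m), g n = ∑ n ∈ Finset.range m, (g (2*n) + g (2*n+1)) := by
  induction m with
  | zero => simp
  | succ m ih =>
      rw [Finset.sum_range_succ, ← ih, Nat.mul_succ]
      rw [Finset.sum_range_succ, Finset.sum_range_succ]
      ring_nf

section aux
variable {A₀ A₁ b₀ b₁ : ℕ} {f : ℕ → ℕ}

/-- sum of f over the block [2^M * m, 2^M * (m+1)) -/
def Sm (f : ℕ → ℕ) (m M : ℕ) : ℕ := ∑ n ∈ Finset.range (2^M), f (2^M * m + n)

lemma Sm_rec (heven : ∀ n, 1 ≤ n → f (2 * n) = A₀ * f n + b₀)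
    (hodd : ∀ n, 1 ≤ n → f (2 * n + 1) = A₁ * f n + b₁)
    (m M : ℕ) (hm : 1 ≤ m) :
    Sm f m (M+1) = (A₀ + A₁) * Sm f m M + (b₀ + b₁) * 2^M := by
  have h2 : 2^(M+1) = 2 * 2^M := by ring
  unfold Sm
  rw [h2, sum_range_two_mul' (fun n => f (2 * 2^M * m + n))]
  have key : ∀ n ∈ Finset.range (2^M),
      (f (2 * 2^M * m + 2*n) + f (2 * 2^M * m + (2*n+1)))
        = (A₀ * f (2^M * m + n) + b₀) + (A₁ * f (2^M * m + n) + b₁) := by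
    intro n hn
    have h1 : 1 ≤ 2^M * m + n := le_trans (Nat.one_le_iff_ne_zero.2 (by positivity)) (Nat.le_add_right _ _)
    have e1 : 2 * 2^M * m + 2*n = 2 * (2^M * m + n) := by ring
    have e2 : 2 * 2^M * m + (2*n+1) = 2 * (2^M * m + n) + 1 := by ring
    rw [e1, e2, heven _ h1, hodd _ h1]
  rw [Finset.sum_congr rfl key]
  rw [Finset.sum_add_distrib, Finset.sum_add_distrib, Finset.sum_add_distrib]
  simp only [Finset.sum_const, Finset.card_range, smul_eq_mul, add_mul,
    Finset.sum_add_distrib, Finset.mul_sum]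
  ring

lemma Sm_closed (heven : ∀ n, 1 ≤ n → f (2 * n) = A₀ * f n + b₀)
    (hodd : ∀ n, 1 ≤ n → f (2 * n + 1) = A₁ * f n + b₁)
    {D : ℕ} (hD : A₀ + A₁ = D + 2)
    (m : ℕ) (hm : 1 ≤ m) : ∀ M,
    D * Sm f m M + (b₀ + b₁) * 2^M = (D+2)^M * (D * f m + (b₀ + b₁)) := by
  intro M
  induction M with
  | zero => simp [Sm]
  | succ M ih =>
      rw [Sm_rec heven hodd m M hm, hD]
      calc D * ((D+2) * Sm f m M + (b₀+b₁) * 2^M) + (b₀+b₁)*2^(M+1)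
          = (D+2) * (D * Sm f m M + (b₀+b₁) * 2^M) := by ring
        _ = (D+2)^(M+1) * (D * f m + (b₀+b₁)) := by rw [ih]; ring

lemma fpos (hf1 : 1 ≤ f 1)
    (heven : ∀ n, 1 ≤ n → f (2 * n) = A₀ * f n + b₀)
    (hodd : ∀ n, 1 ≤ n → f (2 * n + 1) = A₁ * f n + b₁)
    (hA0 : 1 ≤ A₀) (hA1 : 1 ≤ A₁) : ∀ n, 1 ≤ n → 1 ≤ f n := by
  intro n
  induction n using Nat.strong_induction_on with
  | _ n ih =>
    intro hn
    rcases Nat.lt_or_ge n 2 with h | h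
    · interval_cases n
      · exact hf1
    · rcases Nat.even_or_odd n with ⟨m, hm⟩ | ⟨m, hm⟩
      · have hm1 : 1 ≤ m := by omega
        have hf := ih m (by omega) hm1
        calc 1 ≤ A₀ * f m := Nat.one_le_iff_ne_zero.2 (by positivity)
          _ ≤ A₀ * f m + b₀ := Nat.le_add_right _ _
          _ = f (2 * m) := (heven m hm1).symm
          _ = f n := by rw [hm]; ring_nf
      · have hm1 : 1 ≤ m := by omega
        have hf := ih m (by omega) hm1
        calc 1 ≤ A₁ * f m := Nat.one_le_iff_ne_zero.2 (by positivity)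
          _ ≤ A₁ * f m + b₁ := Nat.le_add_right _ _
          _ = f (2 * m + 1) := (hodd m hm1).symm
          _ = f n := by rw [hm]

lemma fbound (hodd : ∀ n, 1 ≤ n → f (2 * n + 1) = A₁ * f n + b₁)
    (heven : ∀ n, 1 ≤ n → f (2 * n) = A₀ * f n + b₀)
    {B : ℕ} (hB0 : A₀ ≤ B) (hB1 : A₁ ≤ B) (hB2 : 2 ≤ B) :
    ∀ L j, j < 2^L → f (2^L + j) + (b₀ + b₁) ≤ B^L * (f 1 + (b₀ + b₁)) := by
  intro L
  induction L with
  | zero => intro j hj; interval_cases j; simp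
  | succ L ih =>
      intro j hj
      set q := j / 2 with hq
      have hj2 : j = 2 * q + j % 2 := (Nat.div_add_mod j 2).symm
      have hql : q < 2^L := by
        have : j < 2 * 2^L := by rw [pow_succ] at hj; omega
        omega
      have hpos : 1 ≤ 2^L + q := le_trans Nat.one_le_two_pow (Nat.le_add_right _ _)
      have hih := ih q hql
      have hr : j % 2 = 0 ∨ j % 2 = 1 := Nat.mod_two_eq_zero_or_one j
      have hsplit : 2^(L+1) + j = 2 * (2^L + q) + j % 2 := by rw [pow_succ]; omega
      rcases hr with hr | hr
      · rw [hsplit, hr, add_zero, heven _ hpos]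
        have h1 : A₀ * f (2^L + q) + b₀ + (b₀ + b₁) ≤ B * (f (2^L + q) + (b₀ + b₁)) := by
          have := Nat.mul_le_mul hB0 (le_refl (f (2^L+q)))
          nlinarith
        calc A₀ * f (2^L + q) + b₀ + (b₀+b₁) ≤ B * (f (2^L + q) + (b₀+b₁)) := h1
          _ ≤ B * (B^L * (f 1 + (b₀+b₁))) := Nat.mul_le_mul_left _ hih
          _ = B^(L+1) * (f 1 + (b₀+b₁)) := by ring
      · rw [hsplit, hr, hodd _ hpos]
        have h1 : A₁ * f (2^L + q) + b₁ + (b₀ + b₁) ≤ B * (f (2^L + q) + (b₀ + b₁)) := by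
          nlinarith
        calc A₁ * f (2^L + q) + b₁ + (b₀+b₁) ≤ B * (f (2^L + q) + (b₀+b₁)) := h1
          _ ≤ B * (B^L * (f 1 + (b₀+b₁))) := Nat.mul_le_mul_left _ hih
          _ = B^(L+1) * (f 1 + (b₀+b₁)) := by ring

end aux

lemma ghostApprox_apply (f : ℕ → ℕ) (N : ℕ) (s : Set ℝ) (hs : MeasurableSet s) :
    ghostApprox f N s = (∑ n ∈ Finset.range (2^N), (f (2^N+n) : ENNReal))⁻¹ *
      ∑ n ∈ Finset.range (2^N), (f (2^N+n) : ENNReal) * s.indicator 1 ((n:ℝ)/2^N) := by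
  rw [ghostApprox, Measure.smul_apply, Measure.finset_sum_apply]
  simp only [Measure.smul_apply, Measure.dirac_apply' _ hs, smul_eq_mul]

lemma sum_block_cast (f : ℕ → ℕ) (N : ℕ) :
    ∑ n ∈ Finset.range (2^N), (f (2^N+n) : ENNReal) = ((Sm f 1 N : ℕ) : ENNReal) := by
  rw [Sm, Nat.cast_sum]
  simp [mul_one]

lemma ghost_prob (f : ℕ → ℕ) (hf : ∀ n, 1 ≤ n → 1 ≤ f n) (N : ℕ) :
    IsProbabilityMeasure (ghostApprox f N) := by
  constructor
  rw [ghostApprox_apply f N Set.univ MeasurableSet.univ]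
  simp only [Set.indicator_univ, Pi.one_apply, mul_one]
  refine ENNReal.inv_mul_cancel ?_ ?_
  · rw [sum_block_cast]
    simp only [ne_eq, Nat.cast_eq_zero]
    have : 1 ≤ Sm f 1 N := by
      rw [Sm]
      calc 1 ≤ f (2^N * 1 + 0) := hf _ (by simpa using Nat.one_le_two_pow)
        _ ≤ _ := Finset.single_le_sum (f := fun n => f (2^N * 1 + n))
            (fun _ _ => Nat.zero_le _) (Finset.mem_range.2 (by positivity))
    omega
  · rw [sum_block_cast]
    exact ENNReal.natCast_ne_top _

lemma ghost_eval (f : ℕ → ℕ) (i M k : ℕ) (hk : k < 2^i) :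
    ghostApprox f (i+M) (Set.Ico ((k:ℝ)/2^i) (((k:ℝ)+1)/2^i)) =
      ((Sm f (2^i + k) M : ℕ) : ENNReal) / ((Sm f 1 (i+M) : ℕ) : ENNReal) := by
  rw [ghostApprox_apply f (i+M) _ measurableSet_Ico, sum_block_cast]
  have h2i : (0:ℝ) < 2^i := by positivity
  have h2N : (0:ℝ) < 2^(i+M) := by positivity
  have hmem : ∀ n : ℕ, ((n:ℝ)/2^(i+M) ∈ Set.Ico ((k:ℝ)/2^i) (((k:ℝ)+1)/2^i)) ↔
      (k*2^M ≤ n ∧ n < (k+1)*2^M) := by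
    intro n
    rw [Set.mem_Ico, div_le_div_iff₀ h2i h2N, div_lt_div_iff₀ h2N h2i, pow_add]
    constructor
    · rintro ⟨h1, h2⟩
      constructor
      · have : (k:ℝ) * 2^M ≤ n := by nlinarith
        exact_mod_cast this
      · have : (n:ℝ) < ((k:ℝ)+1) * 2^M := by nlinarith
        have h' : (n:ℝ) < (((k+1) * 2^M : ℕ) : ℝ) := by push_cast; linarith
        exact_mod_cast h'
    · rintro ⟨h1, h2⟩
      have h1' : (k:ℝ) * 2^M ≤ n := by exact_mod_cast h1
      have h2' : (n:ℝ) < ((k:ℝ)+1) * 2^M := by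
        have := (Nat.cast_lt (α := ℝ)).2 h2
        push_cast at this; linarith
      constructor <;> nlinarith
  have hsum : ∑ n ∈ Finset.range (2^(i+M)), (f (2^(i+M)+n) : ENNReal) *
      (Set.Ico ((k:ℝ)/2^i) (((k:ℝ)+1)/2^i)).indicator 1 ((n:ℝ)/2^(i+M))
      = ((Sm f (2^i + k) M : ℕ) : ENNReal) := by
    have step1 : ∀ n ∈ Finset.range (2^(i+M)), (f (2^(i+M)+n) : ENNReal) *
        (Set.Ico ((k:ℝ)/2^i) (((k:ℝ)+1)/2^i)).indicator 1 ((n:ℝ)/2^(i+M))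
        = if n ∈ Finset.Ico (k*2^M) ((k+1)*2^M) then (f (2^(i+M)+n) : ENNReal) else 0 := by
      intro n _
      rw [Set.indicator_apply]
      by_cases h : (n:ℝ)/2^(i+M) ∈ Set.Ico ((k:ℝ)/2^i) (((k:ℝ)+1)/2^i)
      · rw [if_pos h, if_pos (Finset.mem_Ico.2 ((hmem n).1 h))]
        simp
      · rw [if_neg h, if_neg (fun hc => h ((hmem n).2 (Finset.mem_Ico.1 hc)))]
        simp
    rw [Finset.sum_congr rfl step1, Finset.sum_ite_mem]
    have hinter : Finset.range (2^(i+M)) ∩ Finset.Ico (k*2^M) ((k+1)*2^M)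
        = Finset.Ico (k*2^M) ((k+1)*2^M) := by
      apply Finset.inter_eq_right.2
      intro n hn
      rw [Finset.mem_Ico] at hn
      rw [Finset.mem_range]
      calc n < (k+1)*2^M := hn.2
        _ ≤ 2^i * 2^M := Nat.mul_le_mul_right _ hk
        _ = 2^(i+M) := (pow_add 2 i M).symm
    rw [hinter, Finset.sum_Ico_eq_sum_range]
    have hlen : (k+1)*2^M - k*2^M = 2^M := by
      have h : (k+1)*2^M = k*2^M + 2^M := by ring
      rw [h, Nat.add_sub_cancel_left]
    rw [hlen, Sm, Nat.cast_sum]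
    apply Finset.sum_congr rfl
    intro n _
    congr 2
    rw [pow_add]
    ring
  rw [hsum, div_eq_mul_inv, mul_comm]

lemma ghost_zero (f : ℕ → ℕ) (N : ℕ) (s : Set ℝ) (hs : MeasurableSet s)
    (h : ∀ n : ℕ, n < 2^N → ((n:ℝ)/2^N) ∉ s) : ghostApprox f N s = 0 := by
  rw [ghostApprox_apply f N s hs]
  have hz : ∑ n ∈ Finset.range (2^N), (f (2^N+n) : ENNReal) * s.indicator 1 ((n:ℝ)/2^N) = 0 := by
    apply Finset.sum_eq_zero
    intro n hn
    rw [Set.indicator_of_notMem (h n (Finset.mem_range.1 hn)), mul_zero]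
  rw [hz, mul_zero]

lemma ghost_zero_neg (f : ℕ → ℕ) (N : ℕ) (s : Set ℝ) (hs : MeasurableSet s)
    (h : s ⊆ Set.Iio 0) : ghostApprox f N s = 0 := by
  apply ghost_zero f N s hs
  intro n _ hns
  have h0 : (0:ℝ) ≤ (n:ℝ)/2^N := div_nonneg (Nat.cast_nonneg n) (by positivity)
  linarith [Set.mem_Iio.1 (h hns)]

lemma ghost_zero_ge1 (f : ℕ → ℕ) (N : ℕ) (s : Set ℝ) (hs : MeasurableSet s)
    (h : s ⊆ Set.Ici 1) : ghostApprox f N s = 0 := by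
  apply ghost_zero f N s hs
  intro n hn hns
  have h1 : (1:ℝ) ≤ (n:ℝ)/2^N := Set.mem_Ici.1 (h hns)
  have h2 : (n:ℝ) < 2^N := by exact_mod_cast hn
  have h3 : (0:ℝ) < 2^N := by positivity
  rw [le_div_iff₀ h3, one_mul] at h1
  linarith

lemma natcast_div_ennreal (a b : ℕ) (hb : 0 < b) :
    ((a:ENNReal))/(b:ENNReal) = ENNReal.ofReal ((a:ℝ)/(b:ℝ)) := by
  rw [ENNReal.ofReal_div_of_pos (by exact_mod_cast hb), ENNReal.ofReal_natCast,
    ENNReal.ofReal_natCast]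

lemma ghost_tendsto (f : ℕ → ℕ) (hf : ∀ n, 1 ≤ n → 1 ≤ f n) (μ : Measure ℝ)
    (hμ : IsProbabilityMeasure μ) (hlim : WeakLimit (ghostApprox f) μ) :
    Tendsto (fun N => (⟨ghostApprox f N, ghost_prob f hf N⟩ : ProbabilityMeasure ℝ)) atTop
      (@nhds (ProbabilityMeasure ℝ) MeasureTheory.ProbabilityMeasure.instTopologicalSpace
        (⟨μ, hμ⟩ : ProbabilityMeasure ℝ)) := by
  refine (ProbabilityMeasure.tendsto_iff_forall_integral_tendsto
    (μs := fun N => (⟨ghostApprox f N, ghost_prob f hf N⟩ : ProbabilityMeasure ℝ))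
    (μ := ⟨μ, hμ⟩) (F := atTop)).mpr ?_
  intro g
  exact hlim g

lemma ghost_piece {A₀ A₁ b₀ b₁ : ℕ} {f : ℕ → ℕ} (hf1 : 1 ≤ f 1)
    (heven : ∀ n, 1 ≤ n → f (2 * n) = A₀ * f n + b₀)
    (hodd : ∀ n, 1 ≤ n → f (2 * n + 1) = A₁ * f n + b₁)
    (hA0 : 1 ≤ A₀) (hA1 : 1 ≤ A₁) (hA : 3 ≤ A₀ + A₁)
    (L N j : ℕ) (hLN : L ≤ N) (hj : j < 2^L) :
    ghostApprox f N (Set.Ico ((j:ℝ)/2^L) (((j:ℝ)+1)/2^L)) ≤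
      ENNReal.ofReal ((((max A₀ A₁ : ℕ):ℝ)/((A₀:ℝ)+A₁))^L * ((f 1:ℝ) + (b₀:ℝ) + b₁)) := by
  obtain ⟨M, rfl⟩ : ∃ M, N = L + M := ⟨N - L, by omega⟩
  rw [ghost_eval f L M j hj]
  obtain ⟨D, hD⟩ : ∃ D, A₀ + A₁ = D + 2 := ⟨A₀+A₁-2, by omega⟩
  have hD1 : 1 ≤ D := by omega
  have hB2 : 2 ≤ max A₀ A₁ := by omega
  have key1 := Sm_closed heven hodd hD (2^L + j) (le_trans Nat.one_le_two_pow (Nat.le_add_right _ _)) M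
  have key2 := Sm_closed heven hodd hD 1 le_rfl (L+M)
  have fb := fbound hodd heven (le_max_left A₀ A₁) (le_max_right A₀ A₁) hB2 L j hj
  -- numerator bound
  have hnum : Sm f (2^L + j) M ≤ (D+2)^M * ((max A₀ A₁)^L * (f 1 + (b₀+b₁))) := by
    have h1 : D * Sm f (2^L+j) M ≤ (D+2)^M * (D * f (2^L+j) + (b₀+b₁)) := by
      rw [← key1]; exact Nat.le_add_right _ _
    have h2 : (D+2)^M * (D * f (2^L+j) + (b₀+b₁)) ≤ D * ((D+2)^M * (f (2^L+j) + (b₀+b₁))) := by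
      have h0 : D * f (2^L+j) + (b₀+b₁) ≤ D * (f (2^L+j) + (b₀+b₁)) := by nlinarith
      calc (D+2)^M * (D * f (2^L+j) + (b₀+b₁)) ≤ (D+2)^M * (D * (f (2^L+j) + (b₀+b₁))) :=
            Nat.mul_le_mul_left _ h0
        _ = D * ((D+2)^M * (f (2^L+j) + (b₀+b₁))) := by ring
    have h3 : Sm f (2^L+j) M ≤ (D+2)^M * (f (2^L+j) + (b₀+b₁)) :=
      Nat.le_of_mul_le_mul_left (le_trans h1 h2) (by omega)
    exact le_trans h3 (Nat.mul_le_mul_left _ fb)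
  -- denominator bound
  have hden : (D+2)^(L+M) ≤ Sm f 1 (L+M) := by
    have h2N : 2^(L+M) ≤ (D+2)^(L+M) := Nat.pow_le_pow_left (by omega) _
    have h3 : D * (D+2)^(L+M) + (b₀+b₁)*2^(L+M) ≤ (D+2)^(L+M)*(D*f 1+(b₀+b₁)) := by
      have h4 : D + (b₀+b₁) ≤ D*f 1 + (b₀+b₁) := by nlinarith
      calc D * (D+2)^(L+M) + (b₀+b₁)*2^(L+M) ≤ D * (D+2)^(L+M) + (b₀+b₁)*(D+2)^(L+M) :=
            Nat.add_le_add_left (Nat.mul_le_mul_left _ h2N) _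
        _ = (D+2)^(L+M)*(D+(b₀+b₁)) := by ring
        _ ≤ (D+2)^(L+M)*(D*f 1+(b₀+b₁)) := Nat.mul_le_mul_left _ h4
    rw [← key2] at h3
    have h5 : D * (D+2)^(L+M) ≤ D * Sm f 1 (L+M) :=
      Nat.le_of_add_le_add_right h3
    exact Nat.le_of_mul_le_mul_left h5 (by omega)
  -- ENNReal computation
  calc ((Sm f (2^L + j) M : ℕ) : ENNReal) / ((Sm f 1 (L+M) : ℕ) : ENNReal)
      ≤ (((D+2)^M * ((max A₀ A₁)^L * (f 1 + (b₀+b₁))) : ℕ) : ENNReal)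
          / (((D+2)^(L+M) : ℕ) : ENNReal) :=
        ENNReal.div_le_div (Nat.cast_le.2 hnum) (Nat.cast_le.2 hden)
    _ = ENNReal.ofReal ((((D+2)^M * ((max A₀ A₁)^L * (f 1 + (b₀+b₁))) : ℕ):ℝ)
          / (((D+2)^(L+M) : ℕ):ℝ)) :=
        natcast_div_ennreal _ _ (by positivity)
    _ ≤ ENNReal.ofReal ((((max A₀ A₁ : ℕ):ℝ)/((A₀:ℝ)+A₁))^L * ((f 1:ℝ) + (b₀:ℝ) + b₁)) := by
        apply ENNReal.ofReal_le_ofReal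
        apply le_of_eq
        have hDA : ((A₀:ℝ)+A₁) = ((D:ℝ)+2) := by exact_mod_cast congrArg (Nat.cast (R := ℝ)) hD
        rw [hDA]
        push_cast
        rw [pow_add, div_pow]
        have h1 : ((D:ℝ)+2) ≠ 0 := by positivity
        have h2 : ((D:ℝ)+2)^L ≠ 0 := by positivity
        have h3 : ((D:ℝ)+2)^M ≠ 0 := by positivity
        field_simp
        ring

lemma ghost_atom {A₀ A₁ b₀ b₁ : ℕ} {f : ℕ → ℕ} (hf1 : 1 ≤ f 1)
    (heven : ∀ n, 1 ≤ n → f (2 * n) = A₀ * f n + b₀)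
    (hodd : ∀ n, 1 ≤ n → f (2 * n + 1) = A₁ * f n + b₁)
    (hA0 : 1 ≤ A₀) (hA1 : 1 ≤ A₁) (hA : 3 ≤ A₀ + A₁)
    (μ : Measure ℝ) (hμ : IsProbabilityMeasure μ) (hlim : WeakLimit (ghostApprox f) μ)
    (L j : ℕ) (hj : j ≤ 2^L) : μ {((j:ℝ)/2^L)} = 0 := by
  have hf : ∀ n, 1 ≤ n → 1 ≤ f n := fpos hf1 heven hodd hA0 hA1
  have hPQ := ghost_tendsto f hf μ hμ hlim
  have hApos : (0:ℝ) < (A₀:ℝ) + A₁ := by positivity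
  have hBA : ((max A₀ A₁ : ℕ):ℝ) < (A₀:ℝ) + A₁ := by
    exact_mod_cast (show max A₀ A₁ < A₀ + A₁ by omega)
  set B := max A₀ A₁ with hB
  set Ar : ℝ := (A₀:ℝ) + A₁ with hAr
  set C : ℝ := (f 1:ℝ) + (b₀:ℝ) + b₁ with hC
  have hC0 : 0 ≤ C := by rw [hC]; positivity
  have key : ∀ M : ℕ, μ {((j:ℝ)/2^L)} ≤ ENNReal.ofReal (2 * (((B:ℕ):ℝ)/Ar)^(L+M) * C) := by
    intro M
    set L' := L + M with hL'
    set j' := j * 2^M with hj'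
    have hj'le : j' ≤ 2^L' := by rw [hL', hj', pow_add]; exact Nat.mul_le_mul_right _ hj
    have h2L : (0:ℝ) < 2^L' := by positivity
    have hx : ((j:ℝ)/2^L) = ((j':ℝ)/2^L') := by
      rw [hL', hj']
      push_cast
      rw [pow_add]
      rw [div_eq_div_iff (by positivity) (by positivity)]
      ring
    set G : Set ℝ := Set.Ioo (((j':ℝ)-1)/2^L') (((j':ℝ)+1)/2^L') with hG
    have hxG : ((j':ℝ)/2^L') ∈ G := by
      constructor
      · exact div_lt_div_of_pos_right (by linarith) h2L
      · exact div_lt_div_of_pos_right (by linarith) h2L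
    have hsub : G ⊆ Set.Ico (((j':ℝ)-1)/2^L') ((j':ℝ)/2^L')
        ∪ Set.Ico ((j':ℝ)/2^L') (((j':ℝ)+1)/2^L') := by
      intro x hx'
      rcases lt_or_ge x ((j':ℝ)/2^L') with h | h
      · exact Or.inl ⟨le_of_lt hx'.1, h⟩
      · exact Or.inr ⟨h, hx'.2⟩
    have hbound : ∀ N, L' ≤ N →
        ghostApprox f N G ≤ ENNReal.ofReal (2 * (((B:ℕ):ℝ)/Ar)^L' * C) := by
      intro N hN
      have piece2 : ghostApprox f N (Set.Ico ((j':ℝ)/2^L') (((j':ℝ)+1)/2^L'))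
          ≤ ENNReal.ofReal ((((B:ℕ):ℝ)/Ar)^L' * C) := by
        rcases Nat.lt_or_ge j' (2^L') with h | h
        · exact ghost_piece hf1 heven hodd hA0 hA1 hA L' N j' hN h
        · have hj'eq : j' = 2^L' := le_antisymm hj'le h
          have hz : ghostApprox f N (Set.Ico ((j':ℝ)/2^L') (((j':ℝ)+1)/2^L')) = 0 := by
            apply ghost_zero_ge1 f N _ measurableSet_Ico
            intro x hx'
            have h1 : ((j':ℝ)/2^L') = 1 := by
              rw [hj'eq]; push_cast; field_simp
            rw [Set.mem_Ici]
            rw [Set.mem_Ico] at hx'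
            linarith [hx'.1, h1.symm ▸ hx'.1]
          rw [hz]
          exact zero_le
      have piece1 : ghostApprox f N (Set.Ico (((j':ℝ)-1)/2^L') ((j':ℝ)/2^L'))
          ≤ ENNReal.ofReal ((((B:ℕ):ℝ)/Ar)^L' * C) := by
        rcases Nat.eq_zero_or_pos j' with h | h
        · have hz : ghostApprox f N (Set.Ico (((j':ℝ)-1)/2^L') ((j':ℝ)/2^L')) = 0 := by
            apply ghost_zero_neg f N _ measurableSet_Ico
            intro x hx'
            rw [Set.mem_Ico] at hx'
            rw [Set.mem_Iio]
            have : ((j':ℝ)/2^L') = 0 := by rw [h]; simp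
            linarith [hx'.2]
          rw [hz]
          exact zero_le
        · have hcast : ((j':ℝ)-1) = (((j'-1 : ℕ)):ℝ) := by
            rw [Nat.cast_sub (R := ℝ) h, Nat.cast_one]
          have hcast2 : ((j':ℝ)) = (((j'-1 : ℕ)):ℝ) + 1 := by rw [← hcast]; ring
          rw [hcast, hcast2]
          exact ghost_piece hf1 heven hodd hA0 hA1 hA L' N (j'-1) hN (by omega)
      calc ghostApprox f N G
          ≤ ghostApprox f N (Set.Ico (((j':ℝ)-1)/2^L') ((j':ℝ)/2^L')
              ∪ Set.Ico ((j':ℝ)/2^L') (((j':ℝ)+1)/2^L')) := measure_mono hsub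
        _ ≤ ghostApprox f N (Set.Ico (((j':ℝ)-1)/2^L') ((j':ℝ)/2^L'))
              + ghostApprox f N (Set.Ico ((j':ℝ)/2^L') (((j':ℝ)+1)/2^L')) :=
            measure_union_le _ _
        _ ≤ ENNReal.ofReal ((((B:ℕ):ℝ)/Ar)^L' * C) + ENNReal.ofReal ((((B:ℕ):ℝ)/Ar)^L' * C) :=
            add_le_add piece1 piece2
        _ = ENNReal.ofReal (2 * (((B:ℕ):ℝ)/Ar)^L' * C) := by
            rw [← ENNReal.ofReal_add (by positivity) (by positivity)]
            congr 1
            ring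
    have h1 : μ {((j:ℝ)/2^L)} ≤ μ G := by
      rw [hx]
      exact measure_mono (Set.singleton_subset_iff.2 hxG)
    have h2 : μ G ≤ atTop.liminf (fun N => ghostApprox f N G) :=
      ProbabilityMeasure.le_liminf_measure_open_of_tendsto hPQ isOpen_Ioo
    have h3 : atTop.liminf (fun N => ghostApprox f N G)
        ≤ ENNReal.ofReal (2 * (((B:ℕ):ℝ)/Ar)^L' * C) := by
      exact Filter.liminf_le_of_frequently_le
        ((eventually_atTop.2 ⟨L', hbound⟩).frequently)
        (Filter.isBoundedUnder_of ⟨0, fun _ => zero_le⟩)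
    exact h1.trans (h2.trans h3)
  have hlim0 : Tendsto (fun M => ENNReal.ofReal (2 * (((B:ℕ):ℝ)/Ar)^(L+M) * C)) atTop (𝓝 0) := by
    rw [show (0:ENNReal) = ENNReal.ofReal 0 by simp]
    apply ENNReal.tendsto_ofReal
    have hr0 : (0:ℝ) ≤ ((B:ℕ):ℝ)/Ar := by positivity
    have hr1 : ((B:ℕ):ℝ)/Ar < 1 := (div_lt_one hApos).2 hBA
    have hp : Tendsto (fun M : ℕ => (((B:ℕ):ℝ)/Ar)^M) atTop (𝓝 0) :=
      tendsto_pow_atTop_nhds_zero_of_lt_one hr0 hr1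
    have := hp.const_mul (2 * (((B:ℕ):ℝ)/Ar)^L * C)
    rw [mul_zero] at this
    apply this.congr
    intro M
    rw [pow_add]
    ring
  exact le_antisymm (ge_of_tendsto' hlim0 key) zero_le

lemma Sm_one_pos {f : ℕ → ℕ} (hf : ∀ n, 1 ≤ n → 1 ≤ f n) (N : ℕ) : 0 < Sm f 1 N := by
  rw [Sm]
  calc 0 < f (2^N * 1 + 0) := hf _ (by simpa using Nat.one_le_two_pow)
    _ ≤ _ := Finset.single_le_sum (f := fun n => f (2^N * 1 + n))
        (fun _ _ => Nat.zero_le _) (Finset.mem_range.2 (by positivity))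

theorem stmt_10 (A₀ A₁ b₀ b₁ : ℕ) (hnz : ¬(A₀ = 0 ∧ A₁ = 0 ∧ b₀ = 0 ∧ b₁ = 0))
    (f : ℕ → ℕ) (hf1 : 1 ≤ f 1)
    (heven : ∀ n, 1 ≤ n → f (2 * n) = A₀ * f n + b₀)
    (hodd : ∀ n, 1 ≤ n → f (2 * n + 1) = A₁ * f n + b₁)
    (hA0 : 1 ≤ A₀) (hA1 : 1 ≤ A₁) (hA : 3 ≤ A₀ + A₁)
    (μ : Measure ℝ) (hμ : IsProbabilityMeasure μ)
    (hlim : WeakLimit (ghostApprox f) μ) :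
    ∀ i k : ℕ, k < 2 ^ i →
      μ (Set.Ico ((k : ℝ) / 2 ^ i) (((k : ℝ) + 1) / 2 ^ i)) =
        ENNReal.ofReal ((1 / ((A₀ : ℝ) + A₁) ^ i) *
          (1 / ((f 1 : ℝ) + ((b₀ : ℝ) + b₁) / ((A₀ : ℝ) + A₁ - 2))) *
          ((f (2 ^ i + k) : ℝ) + ((b₀ : ℝ) + b₁) / ((A₀ : ℝ) + A₁ - 2))) := by
  intro i k hk
  have hf : ∀ n, 1 ≤ n → 1 ≤ f n := fpos hf1 heven hodd hA0 hA1
  have hPQ := ghost_tendsto f hf μ hμ hlim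
  set E := Set.Ico ((k:ℝ)/2^i) (((k:ℝ)+1)/2^i) with hE
  -- frontier is null
  have hlt : ((k:ℝ)/2^i) < (((k:ℝ)+1)/2^i) :=
    div_lt_div_of_pos_right (by linarith) (by positivity)
  have hfr : μ (frontier E) = 0 := by
    rw [hE, frontier_Ico hlt]
    have ha : μ {((k:ℝ)/2^i)} = 0 :=
      ghost_atom hf1 heven hodd hA0 hA1 hA μ hμ hlim i k (le_of_lt hk)
    have hb : μ {(((k:ℝ)+1)/2^i)} = 0 := by
      have hb0 := ghost_atom hf1 heven hodd hA0 hA1 hA μ hμ hlim i (k+1) (by omega)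
      have : (((k+1:ℕ)):ℝ) = (k:ℝ)+1 := by push_cast; ring
      rwa [this] at hb0
    rw [Set.insert_eq]
    exact measure_union_null ha hb
  have hconv : Tendsto (fun N => ghostApprox f N E) atTop (𝓝 (μ E)) :=
    ProbabilityMeasure.tendsto_measure_of_null_frontier_of_tendsto' hPQ hfr
  have hconv2 : Tendsto (fun M => ghostApprox f (i+M) E) atTop (𝓝 (μ E)) := by
    have h0 := hconv.comp (tendsto_add_atTop_nat i)
    apply h0.congr
    intro M
    simp [Function.comp, add_comm]
  -- evaluate the approximants
  have heval : ∀ M, ghostApprox f (i+M) E =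
      ENNReal.ofReal (((Sm f (2^i+k) M : ℕ):ℝ)/((Sm f 1 (i+M) : ℕ):ℝ)) := by
    intro M
    rw [hE, ghost_eval f i M k hk, natcast_div_ennreal _ _ (Sm_one_pos hf (i+M))]
  -- real convergence
  obtain ⟨D, hD⟩ : ∃ D, A₀ + A₁ = D + 2 := ⟨A₀+A₁-2, by omega⟩
  have hD1 : 1 ≤ D := by omega
  set Ar : ℝ := (D:ℝ)+2 with hAr
  have hArpos : (0:ℝ) < Ar := by positivity
  have hDne : ((D:ℝ)) ≠ 0 := by positivity
  set c : ℝ := (b₀:ℝ)+b₁ with hc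
  set Gk : ℝ := (D:ℝ) * f (2^i+k) + c with hGk
  set G1 : ℝ := (D:ℝ) * f 1 + c with hG1
  have hG1pos : 0 < G1 := by
    have : (1:ℝ) ≤ (f 1 : ℝ) := by exact_mod_cast hf1
    have hD1' : (1:ℝ) ≤ (D:ℝ) := by exact_mod_cast hD1
    have hc0 : 0 ≤ c := by rw [hc]; positivity
    nlinarith
  have keyk : ∀ M : ℕ, (D:ℝ) * (Sm f (2^i+k) M : ℕ) + c * 2^M = Ar^M * Gk := by
    intro M
    have := Sm_closed heven hodd hD (2^i+k) (le_trans Nat.one_le_two_pow (Nat.le_add_right _ _)) M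
    have hcast := congrArg (Nat.cast (R := ℝ)) this
    push_cast at hcast
    rw [hAr, hGk, hc]
    linarith
  have key1 : ∀ N : ℕ, (D:ℝ) * (Sm f 1 N : ℕ) + c * 2^N = Ar^N * G1 := by
    intro N
    have := Sm_closed heven hodd hD 1 le_rfl N
    have hcast := congrArg (Nat.cast (R := ℝ)) this
    push_cast at hcast
    rw [hAr, hG1, hc]
    linarith
  have hpow : Tendsto (fun M : ℕ => ((2:ℝ)/Ar)^M) atTop (𝓝 0) := by
    apply tendsto_pow_atTop_nhds_zero_of_lt_one (by positivity)
    rw [div_lt_one hArpos]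
    have : (1:ℝ) ≤ (D:ℝ) := by exact_mod_cast hD1
    linarith
  have hnum : Tendsto (fun M => ((Sm f (2^i+k) M : ℕ):ℝ) / Ar^M) atTop (𝓝 (Gk/D)) := by
    have h1 : Tendsto (fun M : ℕ => (Gk - c*((2:ℝ)/Ar)^M)/D) atTop (𝓝 (Gk/D)) := by
      have := ((tendsto_const_nhds (x := Gk)).sub (hpow.const_mul c)).div_const (D:ℝ)
      simpa using this
    apply h1.congr
    intro M
    have hArM : (Ar:ℝ)^M ≠ 0 := by positivity
    have e := keyk M
    rw [div_pow, div_eq_div_iff hDne hArM]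
    field_simp
    linarith [e, mul_comm ((Sm f (2^i+k) M : ℕ):ℝ) (D:ℝ)]
  have hden : Tendsto (fun M => ((Sm f 1 (i+M) : ℕ):ℝ) / Ar^M) atTop (𝓝 (Ar^i*G1/D)) := by
    have h1 : Tendsto (fun M : ℕ => (Ar^i*G1 - (c*2^i)*((2:ℝ)/Ar)^M)/D) atTop (𝓝 (Ar^i*G1/D)) := by
      have := ((tendsto_const_nhds (x := Ar^i*G1)).sub (hpow.const_mul (c*2^i))).div_const (D:ℝ)
      simpa using this
    apply h1.congr
    intro M
    have hArM : (Ar:ℝ)^M ≠ 0 := by positivity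
    have e := key1 (i+M)
    rw [pow_add, pow_add] at e
    rw [div_pow, div_eq_div_iff hDne hArM]
    field_simp
    nlinarith [e]
  have hratio : Tendsto (fun M => ((Sm f (2^i+k) M : ℕ):ℝ) / ((Sm f 1 (i+M) : ℕ):ℝ))
      atTop (𝓝 (Gk/(Ar^i*G1))) := by
    have hne : Ar^i*G1/D ≠ 0 := by positivity
    have h0 := hnum.div hden hne
    have hl : (Gk/D)/(Ar^i*G1/D) = Gk/(Ar^i*G1) := by
      rw [div_div_div_cancel_right₀ hDne]
    rw [hl] at h0
    apply h0.congr
    intro M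
    have hArM : (Ar:ℝ)^M ≠ 0 := by positivity
    simp only [Pi.div_apply]
    rw [div_div_div_cancel_right₀ hArM]
  have hENN : Tendsto (fun M => ghostApprox f (i+M) E) atTop
      (𝓝 (ENNReal.ofReal (Gk/(Ar^i*G1)))) := by
    have := ENNReal.tendsto_ofReal hratio
    apply this.congr
    intro M
    rw [heval M]
  have hfinal : μ E = ENNReal.ofReal (Gk/(Ar^i*G1)) := tendsto_nhds_unique hconv2 hENN
  rw [hfinal]
  congr 1
  have hDA : (A₀:ℝ)+A₁ = Ar := by rw [hAr]; exact_mod_cast congrArg (Nat.cast (R := ℝ)) hD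
  rw [hDA, show Ar - 2 = (D:ℝ) by rw [hAr]; ring]
  rw [hGk, hG1, hc]
  have hArine : Ar ≠ 0 := ne_of_gt hArpos
  have hG1ne : (D:ℝ) * f 1 + ((b₀:ℝ)+b₁) ≠ 0 := by
    rw [← hc, ← hG1]; exact ne_of_gt hG1pos
  field_simp
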